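/- Let f : 𝕋 → (0,∞) be a potential such that log f is 3-equispacing. Then the 3-point diagonal lattice {(0,0), (1/3,1/3), (2/3,2/3)} ⊂ 𝕋² (equal up to torus symmetries to the 3-point Fibonacci lattice) satisfies E_F(Y) ≥ E_F({(0,0),(1/3,1/3),(2/3,2/3)}) = 6 f(1/3)² for every 3-point configuration Y ⊆ 𝕋². -/

import Mathlib

open Finset Real

/-- Pairwise interaction energy of `N` points on the circle `𝕋 = ℝ/ℤ ≃ [0,1)`:
`E_g(y^0,…,y^{N-1}) = Σ_{k ≠ ℓ} g(y^k − y^ℓ)`. -/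
noncomputable def energy1 {N : ℕ} (g : ℝ → ℝ) (y : Fin N → ℝ) : ℝ :=
  ∑ k : Fin N, ∑ ℓ : Fin N, if k = ℓ then 0 else g (y k - y ℓ)

/-- Tensor product energy of `N` points in `𝕋² ≃ [0,1)²`:
`E_F(Y) = Σ_{k ≠ ℓ} ∏_i f(y_i^k − y_i^ℓ)`. -/
noncomputable def energyProd {N d : ℕ} (f : ℝ → ℝ) (y : Fin N → Fin d → ℝ) : ℝ :=
  ∑ k : Fin N, ∑ ℓ : Fin N, if k = ℓ then 0 else ∏ i : Fin d, f (y k i - y ℓ i)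

/-- A (1-periodic, even) function `g` is `N`-equispacing if the `N` equispaced
points minimize the energy `E_g` on the circle. -/
def NEquispacing (N : ℕ) (g : ℝ → ℝ) : Prop :=
  ∀ y : Fin N → ℝ, (∀ k, y k ∈ Set.Ico (0 : ℝ) 1) →
    energy1 g y ≥ energy1 g (fun k : Fin N => ((k : ℕ) : ℝ) / N)

/-- The 3-point diagonal lattice `{(0,0), (1/3,1/3), (2/3,2/3)} ⊂ 𝕋²`, equal
up to torus symmetries to the 3-point Fibonacci lattice. -/
noncomputable def diagonal3 : Fin 3 → Fin 2 → ℝ :=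
  ![![0, 0], ![1/3, 1/3], ![2/3, 2/3]]

lemma sum_offdiag_rw (F : Fin 3 → Fin 3 → ℝ) :
    (∑ k : Fin 3, ∑ ℓ : Fin 3, if k = ℓ then 0 else F k ℓ) =
      ∑ p ∈ Finset.univ.filter (fun p : Fin 3 × Fin 3 => p.1 ≠ p.2), F p.1 p.2 := by
  rw [Finset.sum_filter, Fintype.sum_prod_type]
  exact Finset.sum_congr rfl fun k _ => Finset.sum_congr rfl fun ℓ _ => by
    by_cases h : k = ℓ <;> simp [h]

/-- Universal optimality of the 3-point Fibonacci/diagonal lattice: if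
`f : 𝕋 → (0,∞)` is a potential with `log f` 3-equispacing, then the diagonal
lattice minimizes the tensor product energy `E_F` among all 3-point
configurations in `𝕋²`, and its energy equals `6 f(1/3)²`. -/
theorem diagonal3_minimizes (f : ℝ → ℝ)
    (hf_pos : ∀ t, 0 < f t)
    (hf_per : Function.Periodic f 1)
    (hf_even : ∀ t, f t = f (1 - t))
    (hequi : NEquispacing 3 (fun t => Real.log (f t))) :
    energyProd f diagonal3 = 6 * f (1/3) ^ 2 ∧
    ∀ y : Fin 3 → Fin 2 → ℝ, (∀ k i, y k i ∈ Set.Ico (0 : ℝ) 1) →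
      energyProd f y ≥ energyProd f diagonal3 := by
  have ha : (0:ℝ) < f (1/3) := hf_pos _
  have e3 : f (2/3) = f (1/3) := by
    have h := hf_even (2/3); norm_num at h; exact h
  have e1 : f (-(1/3) : ℝ) = f (1/3) := by
    have h := hf_per (-(1/3)); norm_num at h
    rw [← h, e3]
  have e2 : f (-(2/3) : ℝ) = f (1/3) := by
    have h := hf_per (-(2/3)); norm_num at h
    rw [← h]
  have hdiag : energyProd f diagonal3 = 6 * f (1/3) ^ 2 := by
    simp only [energyProd, diagonal3, Fin.sum_univ_three, Fin.prod_univ_two]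
    norm_num [e1, e2, e3, Fin.ext_iff, Matrix.cons_val, Matrix.cons_val_two, Matrix.tail_cons, Matrix.head_cons]
    ring
  have heq : energy1 (fun t => Real.log (f t))
      (fun k : Fin 3 => ((k : ℕ) : ℝ) / ((3:ℕ) : ℝ)) = 6 * Real.log (f (1/3)) := by
    simp only [energy1, Fin.sum_univ_three]
    norm_num [e1, e2, e3, Fin.ext_iff]
    ring
  refine ⟨hdiag, fun y hy => ?_⟩
  set g : ℝ → ℝ := fun t => Real.log (f t) with hg
  have hS : ∀ i : Fin 2, energy1 g (fun k => y k i) ≥ 6 * Real.log (f (1/3)) := by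
    intro i
    have := hequi (fun k => y k i) (fun k => hy k i)
    rw [hg]
    calc energy1 g (fun k => y k i) ≥ _ := this
    _ = 6 * Real.log (f (1/3)) := heq
  set s : Finset (Fin 3 × Fin 3) := Finset.univ.filter (fun p => p.1 ≠ p.2) with hs
  set t : Fin 3 × Fin 3 → ℝ := fun p => f (y p.1 0 - y p.2 0) * f (y p.1 1 - y p.2 1) with ht
  have htpos : ∀ p, 0 < t p := fun p => mul_pos (hf_pos _) (hf_pos _)
  have hE : energyProd f y = ∑ p ∈ s, t p := by
    rw [energyProd, sum_offdiag_rw]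
    exact Finset.sum_congr rfl fun p _ => by simp [ht, Fin.prod_univ_two]
  have hlogsum : ∑ p ∈ s, Real.log (t p) =
      energy1 g (fun k => y k 0) + energy1 g (fun k => y k 1) := by
    rw [energy1, energy1, sum_offdiag_rw, sum_offdiag_rw, ← Finset.sum_add_distrib]
    exact Finset.sum_congr rfl fun p _ =>
      Real.log_mul (ne_of_gt (hf_pos _)) (ne_of_gt (hf_pos _))
  have hlog : (12:ℝ) * Real.log (f (1/3)) ≤ ∑ p ∈ s, Real.log (t p) := by
    rw [hlogsum]; linarith [hS 0, hS 1]
  have hcard : s.card = 6 := by rw [hs]; decide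
  have hw : ∑ _p ∈ s, (1/6 : ℝ) = 1 := by
    rw [Finset.sum_const, hcard]; norm_num
  have hAM := Real.geom_mean_le_arith_mean_weighted s (fun _ => (1/6:ℝ)) t
    (fun _ _ => by norm_num) hw (fun p _ => (htpos p).le)
  have hprod : ∏ p ∈ s, t p ^ ((1:ℝ)/6) =
      Real.exp (∑ p ∈ s, (1/6 : ℝ) * Real.log (t p)) := by
    rw [Real.exp_sum]
    exact Finset.prod_congr rfl fun p _ => by
      rw [Real.rpow_def_of_pos (htpos p)]; ring_nf
  have hsum16 : ∑ p ∈ s, (1/6 : ℝ) * Real.log (t p)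
      = (1/6) * ∑ p ∈ s, Real.log (t p) := by
    rw [Finset.mul_sum]
  have key : f (1/3) ^ 2 ≤ ∑ p ∈ s, (1/6:ℝ) * t p := by
    have h1 : Real.exp (2 * Real.log (f (1/3))) = f (1/3) ^ 2 := by
      rw [show (2:ℝ) * Real.log (f (1/3)) = Real.log (f (1/3) ^ 2) by
        rw [Real.log_pow]; push_cast; ring]
      exact Real.exp_log (by positivity)
    calc f (1/3) ^ 2 = Real.exp (2 * Real.log (f (1/3))) := h1.symm
      _ ≤ Real.exp (∑ p ∈ s, (1/6 : ℝ) * Real.log (t p)) := by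
          rw [Real.exp_le_exp, hsum16]; linarith
      _ = ∏ p ∈ s, t p ^ ((1:ℝ)/6) := hprod.symm
      _ ≤ ∑ p ∈ s, (1/6:ℝ) * t p := hAM
  have hfinal : ∑ p ∈ s, (1/6:ℝ) * t p = (1/6) * ∑ p ∈ s, t p := by
    rw [Finset.mul_sum]
  rw [hdiag, hE]
  rw [hfinal] at key
  linarith
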